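/- For all μ > 0 and all real B, the integral over X from 0 to ∞ of e^{−μX} · (e^{−X}/(2√π))·(BX+2)·(2√X(X+1) − e^X √π X(2X+3)(1 − erf(√X))) equals Q(μ,B) = (1/μ⁴)·(−3μ² − 3Bμ − 4μ − 6B + (4μ³ + 3Bμ² + 20μ² + 24Bμ + 16μ + 24B)/(4√(1+μ))). -/

import Mathlib

set_option maxHeartbeats 4000000

open Real MeasureTheory

/-- The Gauss error function. -/
noncomputable def erf (t : ℝ) : ℝ := (2 / Real.sqrt π) * ∫ s in (0 : ℝ)..t, Real.exp (-s ^ 2)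

/-- The inverse Laplace transform `Q̌(X, B)` of `Q(μ, B)`. -/
noncomputable def Qcheck (X B : ℝ) : ℝ :=
  (Real.exp (-X) / (2 * Real.sqrt π)) * (B * X + 2) *
    (2 * Real.sqrt X * (X + 1) -
      Real.exp X * Real.sqrt π * X * (2 * X + 3) * (1 - erf (Real.sqrt X)))

/-- The function `Q(μ, B)`. -/
noncomputable def Qfun (μ B : ℝ) : ℝ :=
  (1 / μ ^ 4) *
    (-3 * μ ^ 2 - 3 * B * μ - 4 * μ - 6 * B +
      (4 * μ ^ 3 + 3 * B * μ ^ 2 + 20 * μ ^ 2 + 24 * B * μ + 16 * μ + 24 * B) /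
        (4 * Real.sqrt (1 + μ)))

lemma erf_hasDerivAt (t : ℝ) : HasDerivAt erf (2 / Real.sqrt π * Real.exp (-t ^ 2)) t := by
  have h : HasDerivAt (fun u => ∫ s in (0:ℝ)..u, Real.exp (-s ^ 2)) (Real.exp (-t ^ 2)) t := by
    apply intervalIntegral.integral_hasDerivAt_right
    · exact (Continuous.intervalIntegrable (by continuity) _ _)
    · exact (Continuous.stronglyMeasurableAtFilter (by continuity) _ _)
    · exact (Continuous.continuousAt (by continuity))
  exact h.const_mul (2 / Real.sqrt π)

lemma continuous_erf : Continuous erf :=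
  continuous_iff_continuousAt.mpr fun t => (erf_hasDerivAt t).differentiableAt.continuousAt

lemma erf_zero : erf 0 = 0 := by simp [erf]

lemma tendsto_erf_atTop : Filter.Tendsto erf Filter.atTop (nhds 1) := by
  have h : Filter.Tendsto (fun t => ∫ s in (0:ℝ)..t, Real.exp (-s ^ 2)) Filter.atTop
      (nhds (∫ s in Set.Ioi (0:ℝ), Real.exp (-s ^ 2))) := by
    apply intervalIntegral_tendsto_integral_Ioi
    · have := (integrable_exp_neg_mul_sq (one_pos)).integrableOn (s := Set.Ioi (0:ℝ))
      simpa using this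
    · exact Filter.tendsto_id
  have hg : (∫ s in Set.Ioi (0:ℝ), Real.exp (-s ^ 2)) = Real.sqrt π / 2 := by
    simpa using integral_gaussian_Ioi 1
  have := h.const_mul (2 / Real.sqrt π)
  rw [hg] at this
  have hπ : Real.sqrt π ≠ 0 := by positivity
  have h1 : 2 / Real.sqrt π * (Real.sqrt π / 2) = 1 := by field_simp
  rw [h1] at this
  exact this

lemma erf_nonneg' {t : ℝ} (ht : 0 ≤ t) : 0 ≤ erf t := by
  apply mul_nonneg (by positivity)
  apply intervalIntegral.integral_nonneg ht
  intro s _; positivity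

lemma erf_le_one' {t : ℝ} (ht : 0 ≤ t) : erf t ≤ 1 := by
  have hint : IntegrableOn (fun s : ℝ => Real.exp (-s ^ 2)) (Set.Ioi 0) := by
    have := (integrable_exp_neg_mul_sq (one_pos)).integrableOn (s := Set.Ioi (0:ℝ))
    simpa using this
  have h1 : (∫ s in (0:ℝ)..t, Real.exp (-s ^ 2)) ≤ ∫ s in Set.Ioi (0:ℝ), Real.exp (-s ^ 2) := by
    rw [intervalIntegral.integral_of_le ht]
    apply setIntegral_mono_set hint
    · filter_upwards with s; positivity
    · exact HasSubset.Subset.eventuallyLE Set.Ioc_subset_Ioi_self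
  have hg : (∫ s in Set.Ioi (0:ℝ), Real.exp (-s ^ 2)) = Real.sqrt π / 2 := by
    simpa using integral_gaussian_Ioi 1
  rw [hg] at h1
  have hπ : (0:ℝ) < Real.sqrt π := by positivity
  calc erf t ≤ (2 / Real.sqrt π) * (Real.sqrt π / 2) := by
        apply mul_le_mul_of_nonneg_left h1 (by positivity)
    _ = 1 := by field_simp

lemma Qcheck_eq (X B : ℝ) : Qcheck X B =
    (Real.exp (-X) / Real.sqrt π) * (B * X + 2) * (Real.sqrt X * (X + 1)) -
      (1 / 2) * (B * X + 2) * (X * (2 * X + 3)) * (1 - erf (Real.sqrt X)) := by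
  have hπ : Real.sqrt π ≠ 0 := by positivity
  have he : Real.exp (-X) * Real.exp X = 1 := by rw [← Real.exp_add]; simp
  unfold Qcheck
  rw [Real.exp_neg]
  field_simp

noncomputable def ca (μ B : ℝ) : ℝ := B / μ
noncomputable def cb (μ B : ℝ) : ℝ := (3 * ca μ B + (3 * B + 4) / 2) / μ
noncomputable def cc (μ B : ℝ) : ℝ := (2 * cb μ B + 3) / μ
noncomputable def cd (μ B : ℝ) : ℝ := cc μ B / μ
noncomputable def cβ (μ B : ℝ) : ℝ := -B / μ
noncomputable def cγ (μ B : ℝ) : ℝ := (5 * cβ μ B / 2 - (B + 2) - cb μ B) / (1 + μ)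
noncomputable def cδ (μ B : ℝ) : ℝ := (3 * cγ μ B / 2 - 2 - cc μ B) / (1 + μ)
noncomputable def cr (μ B : ℝ) : ℝ := (cd μ B - cδ μ B / 2) / Real.sqrt (1 + μ)

noncomputable def Fant (μ B : ℝ) (X : ℝ) : ℝ :=
  1 / Real.sqrt π * Real.sqrt X * Real.exp (-(1 + μ) * X) *
      (cβ μ B * X ^ 2 + cγ μ B * X + cδ μ B) +
    Real.exp (-μ * X) * (ca μ B * X ^ 3 + cb μ B * X ^ 2 + cc μ B * X + cd μ B) *
      (1 - erf (Real.sqrt X)) +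
    cr μ B * erf (Real.sqrt ((1 + μ) * X))

lemma Fant_hasDerivAt {μ : ℝ} (B : ℝ) (hμ : 0 < μ) {X : ℝ} (hX : 0 < X) :
    HasDerivAt (Fant μ B) (Real.exp (-μ * X) * Qcheck X B) X := by
  obtain ⟨u, hu, rfl⟩ : ∃ u : ℝ, 0 < u ∧ X = u ^ 2 :=
    ⟨Real.sqrt X, Real.sqrt_pos.mpr hX, (Real.sq_sqrt hX.le).symm⟩
  have hsu : Real.sqrt (u ^ 2) = u := Real.sqrt_sq hu.le
  have hw : Real.sqrt (1 + μ) * Real.sqrt (1 + μ) = 1 + μ := Real.mul_self_sqrt (by positivity)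
  have hs1 : Real.sqrt ((1 + μ) * u ^ 2) = Real.sqrt (1 + μ) * u := by
    rw [Real.sqrt_mul (by positivity), hsu]
  have hsq : HasDerivAt Real.sqrt (1 / (2 * Real.sqrt (u ^ 2))) (u ^ 2) :=
    Real.hasDerivAt_sqrt (by positivity)
  have hexp1 : HasDerivAt (fun X : ℝ => Real.exp (-(1 + μ) * X))
      (-(1 + μ) * Real.exp (-(1 + μ) * u ^ 2)) (u ^ 2) := by
    simpa [mul_comm] using ((hasDerivAt_id (u ^ 2)).const_mul (-(1 + μ))).exp
  have hexp2 : HasDerivAt (fun X : ℝ => Real.exp (-μ * X))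
      (-μ * Real.exp (-μ * u ^ 2)) (u ^ 2) := by
    simpa [mul_comm] using ((hasDerivAt_id (u ^ 2)).const_mul (-μ)).exp
  have hpoly1 := (((hasDerivAt_pow 2 (u ^ 2)).const_mul (cβ μ B)).add
    ((hasDerivAt_id (u ^ 2)).const_mul (cγ μ B))).add_const (cδ μ B)
  have hpoly2 := ((((hasDerivAt_pow 3 (u ^ 2)).const_mul (ca μ B)).add
    ((hasDerivAt_pow 2 (u ^ 2)).const_mul (cb μ B))).add
    ((hasDerivAt_id (u ^ 2)).const_mul (cc μ B))).add_const (cd μ B)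
  have herf := (erf_hasDerivAt (Real.sqrt (u ^ 2))).comp (u ^ 2) hsq
  have hin : HasDerivAt (fun X : ℝ => (1 + μ) * X) (1 + μ) (u ^ 2) := by
    simpa using (hasDerivAt_id (u ^ 2)).const_mul (1 + μ)
  have hsq2 := (Real.hasDerivAt_sqrt (x := (1 + μ) * u ^ 2) (by positivity)).comp (u ^ 2) hin
  have herf2 := (erf_hasDerivAt (Real.sqrt ((1 + μ) * u ^ 2))).comp (u ^ 2) hsq2
  have h1 := ((hsq.const_mul ((1 : ℝ) / Real.sqrt π)).mul hexp1).mul hpoly1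
  have h2 := (hexp2.mul hpoly2).mul (herf.const_sub 1)
  have h3 := herf2.const_mul (cr μ B)
  have htot := (h1.add h2).add h3
  have hval : Real.exp (-μ * u ^ 2) * Qcheck (u ^ 2) B =
      (1 / √π * (1 / (2 * √(u ^ 2))) * rexp (-(1 + μ) * u ^ 2) +
          1 / √π * √(u ^ 2) * (-(1 + μ) * rexp (-(1 + μ) * u ^ 2))) *
          (cβ μ B * (u ^ 2) ^ 2 + cγ μ B * u ^ 2 + cδ μ B) +
        1 / √π * √(u ^ 2) * rexp (-(1 + μ) * u ^ 2) *
          (cβ μ B * (↑2 * (u ^ 2) ^ 1) + cγ μ B * 1) +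
        ((-μ * rexp (-μ * u ^ 2) *
            (ca μ B * (u ^ 2) ^ 3 + cb μ B * (u ^ 2) ^ 2 + cc μ B * u ^ 2 + cd μ B) +
            rexp (-μ * u ^ 2) *
              (ca μ B * (↑3 * (u ^ 2) ^ 2) + cb μ B * (↑2 * (u ^ 2) ^ 1) + cc μ B * 1)) *
            (1 - erf √(u ^ 2)) +
          rexp (-μ * u ^ 2) *
            (ca μ B * (u ^ 2) ^ 3 + cb μ B * (u ^ 2) ^ 2 + cc μ B * u ^ 2 + cd μ B) *
            -(2 / √π * rexp (-√(u ^ 2) ^ 2) * (1 / (2 * √(u ^ 2))))) +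
        cr μ B * (2 / √π * rexp (-√((1 + μ) * u ^ 2) ^ 2) * (1 / (2 * √((1 + μ) * u ^ 2)) * (1 + μ))) := by
    rw [Qcheck_eq, hsu, hs1]
    have hπ : Real.sqrt π ≠ 0 := by positivity
    have hwpos : (0:ℝ) < Real.sqrt (1 + μ) := Real.sqrt_pos.mpr (by positivity)
    have hE1 : Real.exp (-(1 + μ) * u ^ 2) = Real.exp (-u ^ 2) * Real.exp (-μ * u ^ 2) := by
      rw [← Real.exp_add]; ring_nf
    have hE2 : Real.exp (-(Real.sqrt (1 + μ) * u) ^ 2) =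
        Real.exp (-u ^ 2) * Real.exp (-μ * u ^ 2) := by
      rw [← Real.exp_add]; congr 1; nlinarith [hw]
    have hune : u ≠ 0 := hu.ne'
    have hπ2 : (0:ℝ) < Real.sqrt π := Real.sqrt_pos.mpr Real.pi_pos
    have hcr : cr μ B * (2 / Real.sqrt π * (Real.exp (-u^2) * Real.exp (-μ*u^2)) *
        (1 / (2 * (Real.sqrt (1+μ) * u)) * (1 + μ))) =
        (cd μ B - cδ μ B / 2) * (Real.exp (-u^2) * Real.exp (-μ*u^2)) / (Real.sqrt π * u) := by
      have e3 : 1 / (2 * (Real.sqrt (1+μ) * u)) * (1 + μ) = Real.sqrt (1+μ) / (2*u) := by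
        field_simp
        linear_combination hw.symm
      unfold cr
      rw [e3]
      field_simp
    rw [hE1, hE2, hcr]
    unfold cδ cγ cβ cd cc cb ca
    field_simp
    ring
  rw [hval]
  exact htot

lemma tendsto_sqrt_atTop : Filter.Tendsto Real.sqrt Filter.atTop Filter.atTop := by
  apply Filter.tendsto_atTop_atTop.mpr
  intro b
  refine ⟨(max b 0) ^ 2, fun a ha => ?_⟩
  calc b ≤ max b 0 := le_max_left _ _
    _ = Real.sqrt ((max b 0) ^ 2) := (Real.sqrt_sq (le_max_right _ _)).symm
    _ ≤ Real.sqrt a := Real.sqrt_le_sqrt ha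

lemma tendsto_pow_exp (n : ℕ) {c : ℝ} (hc : 0 < c) :
    Filter.Tendsto (fun x : ℝ => x ^ n * Real.exp (-c * x)) Filter.atTop (nhds 0) := by
  have h := tendsto_rpow_mul_exp_neg_mul_atTop_nhds_zero n c hc
  apply h.congr'
  filter_upwards [Filter.eventually_ge_atTop 0] with x hx
  rw [Real.rpow_natCast]

lemma tendsto_sqrt_exp {c : ℝ} (hc : 0 < c) :
    Filter.Tendsto (fun x : ℝ => Real.sqrt x * Real.exp (-c * x)) Filter.atTop (nhds 0) := by
  have h := tendsto_rpow_mul_exp_neg_mul_atTop_nhds_zero (1/2) c hc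
  apply h.congr'
  filter_upwards [Filter.eventually_ge_atTop 0] with x hx
  rw [Real.sqrt_eq_rpow]

lemma Fant_tendsto {μ : ℝ} (B : ℝ) (hμ : 0 < μ) :
    Filter.Tendsto (Fant μ B) Filter.atTop (nhds (cr μ B)) := by
  have hs : (0:ℝ) < (1 + μ) / 2 := by linarith
  have T1 : Filter.Tendsto (fun x : ℝ =>
      1 / Real.sqrt π * Real.sqrt x * Real.exp (-(1 + μ) * x) *
        (cβ μ B * x ^ 2 + cγ μ B * x + cδ μ B)) Filter.atTop (nhds 0) := by
    have hA := tendsto_sqrt_exp hs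
    have hB : Filter.Tendsto (fun x : ℝ =>
        (cβ μ B * x ^ 2 + cγ μ B * x + cδ μ B) * Real.exp (-((1 + μ) / 2) * x))
        Filter.atTop (nhds 0) := by
      have h2 := (tendsto_pow_exp 2 hs).const_mul (cβ μ B)
      have h1 := (tendsto_pow_exp 1 hs).const_mul (cγ μ B)
      have h0 := (tendsto_pow_exp 0 hs).const_mul (cδ μ B)
      have := (h2.add h1).add h0
      simp only [mul_zero, add_zero] at this
      apply this.congr
      intro x; ring
    have := (hA.mul hB).const_mul (1 / Real.sqrt π)
    simp only [mul_zero, zero_mul] at this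
    apply this.congr
    intro x
    rw [show -(1 + μ) * x = -((1 + μ) / 2) * x + -((1 + μ) / 2) * x by ring, Real.exp_add]
    ring
  have T2 : Filter.Tendsto (fun x : ℝ =>
      Real.exp (-μ * x) * (ca μ B * x ^ 3 + cb μ B * x ^ 2 + cc μ B * x + cd μ B) *
        (1 - erf (Real.sqrt x))) Filter.atTop (nhds 0) := by
    have hA : Filter.Tendsto (fun x : ℝ =>
        (ca μ B * x ^ 3 + cb μ B * x ^ 2 + cc μ B * x + cd μ B) * Real.exp (-μ * x))
        Filter.atTop (nhds 0) := by
      have h3 := (tendsto_pow_exp 3 hμ).const_mul (ca μ B)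
      have h2 := (tendsto_pow_exp 2 hμ).const_mul (cb μ B)
      have h1 := (tendsto_pow_exp 1 hμ).const_mul (cc μ B)
      have h0 := (tendsto_pow_exp 0 hμ).const_mul (cd μ B)
      have := ((h3.add h2).add h1).add h0
      simp only [mul_zero, add_zero] at this
      apply this.congr
      intro x; ring
    have hB : Filter.Tendsto (fun x : ℝ => 1 - erf (Real.sqrt x)) Filter.atTop (nhds 0) := by
      have := tendsto_const_nhds (x := (1:ℝ)) (f := Filter.atTop) |>.sub
        (tendsto_erf_atTop.comp _root_.tendsto_sqrt_atTop)
      simpa using this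
    have := hA.mul hB
    simp only [mul_zero] at this
    apply this.congr
    intro x; ring
  have T3 : Filter.Tendsto (fun x : ℝ => cr μ B * erf (Real.sqrt ((1 + μ) * x)))
      Filter.atTop (nhds (cr μ B)) := by
    have hin : Filter.Tendsto (fun x : ℝ => (1 + μ) * x) Filter.atTop Filter.atTop :=
      Filter.Tendsto.const_mul_atTop (by linarith) Filter.tendsto_id
    have := (tendsto_erf_atTop.comp (_root_.tendsto_sqrt_atTop.comp hin)).const_mul (cr μ B)
    simpa using this
  have h := (T1.add T2).add T3
  simp only [zero_add] at h
  exact h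

lemma continuous_Fant (μ B : ℝ) : Continuous (Fant μ B) := by
  unfold Fant
  refine Continuous.add (Continuous.add ?_ ?_) ?_
  · exact ((continuous_const.mul Real.continuous_sqrt).mul
      (Real.continuous_exp.comp (continuous_const.mul continuous_id))).mul (by continuity)
  · exact ((Real.continuous_exp.comp (continuous_const.mul continuous_id)).mul
      (by continuity)).mul (continuous_const.sub (continuous_erf.comp Real.continuous_sqrt))
  · exact continuous_const.mul (continuous_erf.comp
      (Real.continuous_sqrt.comp (continuous_const.mul continuous_id)))

lemma Fant_zero (μ B : ℝ) : Fant μ B 0 = cd μ B := by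
  simp [Fant, erf_zero]

lemma Qcheck_abs_le (B : ℝ) : ∀ᶠ X in Filter.atTop, |Qcheck X B| ≤ 5 * (|B| + 2) * X ^ 3 := by
  filter_upwards [Filter.eventually_ge_atTop 1] with X hX1
  have hX0 : (0:ℝ) ≤ X := le_trans zero_le_one hX1
  have hsX : Real.sqrt X ≤ X :=
    calc Real.sqrt X ≤ Real.sqrt (X ^ 2) := Real.sqrt_le_sqrt (by nlinarith)
      _ = X := Real.sqrt_sq hX0
  have hsp : 0 ≤ Real.sqrt X := Real.sqrt_nonneg X
  have hE0 : 0 ≤ erf (Real.sqrt X) := erf_nonneg' hsp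
  have hE1 : erf (Real.sqrt X) ≤ 1 := erf_le_one' hsp
  have hexp0 : 0 < Real.exp (-X) := Real.exp_pos _
  have hexp : Real.exp (-X) ≤ 1 := by
    have := Real.exp_le_exp.mpr (show -X ≤ 0 by linarith)
    simpa using this
  have hsπ : 1 ≤ Real.sqrt π := Real.one_le_sqrt.mpr (by nlinarith [Real.pi_gt_three])
  have hb1 : |B * X + 2| ≤ (|B| + 2) * X := by
    calc |B * X + 2| ≤ |B * X| + |(2:ℝ)| := abs_add_le _ _
      _ = |B| * X + 2 := by rw [abs_mul, abs_of_nonneg hX0]; norm_num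
      _ ≤ (|B| + 2) * X := by nlinarith [abs_nonneg B]
  have hb2 : |Real.exp (-X) / Real.sqrt π| ≤ 1 := by
    rw [abs_of_nonneg (by positivity), div_le_one (by positivity)]
    linarith
  have h1 : |Real.exp (-X) / Real.sqrt π * (B * X + 2) * (Real.sqrt X * (X + 1))| ≤
      2 * (|B| + 2) * X ^ 3 := by
    rw [abs_mul, abs_mul]
    have hb3 : |Real.sqrt X * (X + 1)| ≤ 2 * X ^ 2 := by
      rw [abs_of_nonneg (by positivity)]
      nlinarith
    calc |Real.exp (-X) / Real.sqrt π| * |B * X + 2| * |Real.sqrt X * (X + 1)| ≤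
        1 * ((|B| + 2) * X) * (2 * X ^ 2) := by
          apply mul_le_mul (mul_le_mul hb2 hb1 (abs_nonneg _) zero_le_one) hb3 (abs_nonneg _)
          positivity
      _ = 2 * (|B| + 2) * X ^ 3 := by ring
  have h2 : |1 / 2 * (B * X + 2) * (X * (2 * X + 3)) * (1 - erf (Real.sqrt X))| ≤
      3 * (|B| + 2) * X ^ 3 := by
    rw [abs_mul, abs_mul, abs_mul]
    have hb4 : |X * (2 * X + 3)| ≤ 5 * X ^ 2 := by
      rw [abs_of_nonneg (by positivity)]
      nlinarith
    have hb5 : |1 - erf (Real.sqrt X)| ≤ 1 := by rw [abs_of_nonneg (by linarith)]; linarith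
    have hb6 : |(1:ℝ)/2| = 1/2 := by norm_num
    calc |(1:ℝ)/2| * |B * X + 2| * |X * (2 * X + 3)| * |1 - erf (Real.sqrt X)| ≤
        1/2 * ((|B| + 2) * X) * (5 * X ^ 2) * 1 := by
          apply mul_le_mul _ hb5 (abs_nonneg _) (by positivity)
          apply mul_le_mul _ hb4 (abs_nonneg _) (by positivity)
          apply mul_le_mul (le_of_eq hb6) hb1 (abs_nonneg _) (by norm_num)
      _ ≤ 3 * (|B| + 2) * X ^ 3 := by
          nlinarith [mul_nonneg (by positivity : (0:ℝ) ≤ |B| + 2) (pow_nonneg hX0 3)]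
  rw [Qcheck_eq]
  calc |Real.exp (-X) / Real.sqrt π * (B * X + 2) * (Real.sqrt X * (X + 1)) -
        1 / 2 * (B * X + 2) * (X * (2 * X + 3)) * (1 - erf (Real.sqrt X))| ≤
      |Real.exp (-X) / Real.sqrt π * (B * X + 2) * (Real.sqrt X * (X + 1))| +
        |1 / 2 * (B * X + 2) * (X * (2 * X + 3)) * (1 - erf (Real.sqrt X))| := abs_sub _ _
    _ ≤ 5 * (|B| + 2) * X ^ 3 := by linarith

lemma integrand_integrable (μ B : ℝ) (hμ : 0 < μ) :
    IntegrableOn (fun X => Real.exp (-μ * X) * Qcheck X B) (Set.Ioi (0:ℝ)) := by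
  apply integrable_of_isBigO_exp_neg (b := μ / 2) (by positivity)
  · apply Continuous.continuousOn
    apply Continuous.mul (Real.continuous_exp.comp (continuous_const.mul continuous_id))
    unfold Qcheck
    apply Continuous.mul
    · apply Continuous.mul _ (by continuity)
      exact (Real.continuous_exp.comp continuous_neg).div_const _
    · apply Continuous.sub (by continuity)
      exact ((((Real.continuous_exp.mul continuous_const).mul continuous_id).mul
        (by continuity)).mul (continuous_const.sub (continuous_erf.comp Real.continuous_sqrt)))
  · have h1 : (fun X => Real.exp (-μ * X) * Qcheck X B) =O[Filter.atTop]
        fun x => x ^ 3 * Real.exp (-μ * x) := by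
      apply Asymptotics.IsBigO.of_bound (5 * (|B| + 2))
      filter_upwards [Qcheck_abs_le B, Filter.eventually_ge_atTop 0] with X hQ hX0
      have hexp : 0 < Real.exp (-μ * X) := Real.exp_pos _
      rw [Real.norm_eq_abs, Real.norm_eq_abs, abs_mul, abs_of_nonneg hexp.le,
        abs_of_nonneg (by positivity : (0:ℝ) ≤ X ^ 3 * Real.exp (-μ * X))]
      calc Real.exp (-μ * X) * |Qcheck X B| ≤ Real.exp (-μ * X) * (5 * (|B| + 2) * X ^ 3) :=
            mul_le_mul_of_nonneg_left hQ hexp.le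
        _ = 5 * (|B| + 2) * (X ^ 3 * Real.exp (-μ * X)) := by ring
    have h2 : (fun x : ℝ => x ^ 3 * Real.exp (-μ * x)) =o[Filter.atTop]
        fun x => Real.exp (-(μ / 2) * x) := by
      have hne : ∀ᶠ x : ℝ in Filter.atTop,
          Real.exp (-(μ/2) * x) = 0 → x ^ 3 * Real.exp (-μ * x) = 0 := by
        filter_upwards with x hx
        exact absurd hx (Real.exp_ne_zero _)
      rw [Asymptotics.isLittleO_iff_tendsto' hne]
      have := tendsto_pow_exp 3 (half_pos hμ)
      apply this.congr'
      filter_upwards with x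
      rw [eq_div_iff (Real.exp_ne_zero _), mul_assoc, ← Real.exp_add]
      ring_nf
    exact h1.trans h2.isBigO

lemma cr_sub_cd (μ B : ℝ) (hμ : 0 < μ) : cr μ B - cd μ B = Qfun μ B := by
  have hw0 : (0:ℝ) < Real.sqrt (1 + μ) := Real.sqrt_pos.mpr (by linarith)
  have hw : Real.sqrt (1 + μ) * Real.sqrt (1 + μ) = 1 + μ :=
    Real.mul_self_sqrt (by linarith)
  unfold Qfun cr cδ cγ cβ cd cc cb ca
  set w := Real.sqrt (1 + μ) with hwdef
  have hμ' := hμ.ne'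
  have hw' := hw0.ne'
  have h1μ : (0:ℝ) < 1 + μ := by linarith
  have hdiv : ∀ y : ℝ, y / w = y * w / (1 + μ) := by
    intro y
    rw [div_eq_div_iff hw' h1μ.ne']
    linear_combination (-1) * y * hw
  have hdiv2 : ∀ y : ℝ, y / (4 * w) = y * w / (4 * (1 + μ)) := by
    intro y
    rw [div_eq_div_iff (by positivity) (by positivity)]
    linear_combination (-4) * y * hw
  rw [hdiv, hdiv2]
  field_simp
  ring

theorem laplace_transform_of_Qcheck (μ B : ℝ) (hμ : 0 < μ) :
    ∫ X in Set.Ioi (0 : ℝ), Real.exp (-μ * X) * Qcheck X B = Qfun μ B := by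
  rw [integral_Ioi_of_hasDerivAt_of_tendsto
    ((continuous_Fant μ B).continuousAt.continuousWithinAt)
    (fun X hX => Fant_hasDerivAt B hμ hX)
    (integrand_integrable μ B hμ)
    (Fant_tendsto B hμ)]
  rw [Fant_zero]
  exact cr_sub_cd μ B hμ
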